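/- arXiv:1401.0830 — 2 statements merged into one kernel-verified Lean document; each statement's English description precedes it below -/
import Mathlib

section
/- Let H = p1^2 + p2^2, J = x*p2 - y*p1, L1 = J^2, L2 = p1^2 be functions of (x, y, p1, p2), and let R = {L1, L2} be the canonical Poisson bracket. Then R^2 = 16 * L1 * L2 * (H - L2). -/
/-- Canonical Poisson bracket on phase space (x, y, p1, p2):
{F, G} = F_{p1} G_x + F_{p2} G_y - G_{p1} F_x - G_{p2} F_y. -/
noncomputable def poissonBracket (F G : ℝ → ℝ → ℝ → ℝ → ℝ) (x y p1 p2 : ℝ) : ℝ :=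
    deriv (fun t => F x y t p2) p1 * deriv (fun t => G t y p1 p2) x
  + deriv (fun t => F x y p1 t) p2 * deriv (fun t => G x t p1 p2) y
  - deriv (fun t => G x y t p2) p1 * deriv (fun t => F t y p1 p2) x
  - deriv (fun t => G x y p1 t) p2 * deriv (fun t => F x t p1 p2) y

noncomputable def Hf : ℝ → ℝ → ℝ → ℝ → ℝ := fun _ _ p1 p2 => p1^2 + p2^2
noncomputable def L1f : ℝ → ℝ → ℝ → ℝ → ℝ := fun x y p1 p2 => (x*p2 - y*p1)^2
noncomputable def L2f : ℝ → ℝ → ℝ → ℝ → ℝ := fun _ _ p1 _ => p1^2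

lemma deriv_affine_sq (a b c : ℝ) :
    deriv (fun t : ℝ => (a + b*t)^2) c = 2*(a + b*c)*b := by
  have h : HasDerivAt (fun t : ℝ => (a + b*t)^2) ((2:ℕ)*(a + b*c)^(2-1)*b) c := by
    simpa using (((hasDerivAt_id c).const_mul b).const_add a).fun_pow 2
  have := h.deriv
  simpa using this

theorem E1_free_casimir (x y p1 p2 : ℝ) :
    (poissonBracket L1f L2f x y p1 p2)^2 =
      16 * L1f x y p1 p2 * L2f x y p1 p2 * (Hf x y p1 p2 - L2f x y p1 p2) := by
  have h1 : deriv (fun t : ℝ => L1f x y t p2) p1 = 2 * (x*p2 - y*p1) * (-y) := by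
    have e : (fun t : ℝ => L1f x y t p2) = fun t => (x*p2 + (-y)*t)^2 := by
      funext t; simp [L1f]; ring
    rw [e, deriv_affine_sq]; ring
  have h2 : deriv (fun t : ℝ => L1f x y p1 t) p2 = 2 * (x*p2 - y*p1) * x := by
    have e : (fun t : ℝ => L1f x y p1 t) = fun t => ((-(y*p1)) + x*t)^2 := by
      funext t; simp [L1f]; ring
    rw [e, deriv_affine_sq]; ring
  have h6 : deriv (fun t : ℝ => L1f t y p1 p2) x = 2 * (x*p2 - y*p1) * p2 := by
    have e : (fun t : ℝ => L1f t y p1 p2) = fun t => ((-(y*p1)) + p2*t)^2 := by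
      funext t; simp [L1f]; ring
    rw [e, deriv_affine_sq]; ring
  have h3 : deriv (fun t : ℝ => L2f t y p1 p2) x = 0 := by simp [L2f]
  have h4 : deriv (fun t : ℝ => L2f x t p1 p2) y = 0 := by simp [L2f]
  have h7 : deriv (fun t : ℝ => L2f x y p1 t) p2 = 0 := by simp [L2f]
  have h5 : deriv (fun t : ℝ => L2f x y t p2) p1 = 2 * p1 := by
    have e : (fun t : ℝ => L2f x y t p2) = fun t : ℝ => t^2 := rfl
    rw [e]; simp
  unfold poissonBracket
  rw [h1, h2, h3, h4, h5, h6, h7]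
  simp only [Hf, L1f, L2f]
  ring
end

section
/- Let H = J1^2 + J2^2 + J3^2 + a3/s3^2, X = J3, L1 = J1^2 + a3*s2^2/s3^2, L2 = J1*J2 - a3*s1*s2/s3^2, with J1 = s2 p3 - s3 p2 etc. Then, subject to s1^2 + s2^2 + s3^2 = 1 and s1 p1 + s2 p2 + s3 p3 = 0, the Casimir identity L1^2 + L2^2 - L1*H + L1*X^2 + a3*X^2 + a3*L1 = 0 holds. -/
theorem S3_casimir (a3 : ℝ) (s1 s2 s3 p1 p2 p3 : ℝ)
    (h3 : s3 ≠ 0)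
    (hsphere : s1^2 + s2^2 + s3^2 = 1)
    (htangent : s1*p1 + s2*p2 + s3*p3 = 0) :
    let J1 := s2*p3 - s3*p2
    let J2 := s3*p1 - s1*p3
    let J3 := s1*p2 - s2*p1
    let H := J1^2 + J2^2 + J3^2 + a3/s3^2
    let X := J3
    let L1 := J1^2 + a3*s2^2/s3^2
    let L2 := J1*J2 - a3*s1*s2/s3^2
    L1^2 + L2^2 - L1*H + L1*X^2 + a3*X^2 + a3*L1 = 0 := by
  intro J1 J2 J3 H X L1 L2
  simp only [J1, J2, J3, H, X, L1, L2]
  set c : ℝ := a3 / s3^2 with hc_def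
  have hc : c * s3^2 = a3 := by
    rw [hc_def]; field_simp
  have hdiv1 : a3 * s2^2 / s3^2 = c * s2^2 := by
    rw [hc_def]; ring
  have hdiv2 : a3 * s1 * s2 / s3^2 = c * s1 * s2 := by
    rw [hc_def]; ring
  rw [hdiv1, hdiv2]
  linear_combination
    (-((s2*p3-s3*p2)^2 + (s1*p2-s2*p1)^2 + c*s2^2)) * hc
    + (c*(s2*p3-s3*p2)^2 + c^2*s2^2) * hsphere
end
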